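/- Let q be a power of an odd prime with q ≡ 1 (mod 3) and F = 𝔽_q. For all x, y, r, s ∈ F with r ≠ s, every walk in the graph R from the line [x,y,r] to the line [x,y,s] has length at least 6, and likewise every walk from the point (x,y,r) to the point (x,y,s) has length at least 6. -/

import Mathlib

/-- Vertices: points (left component) and lines (right component), each a triple over `F`. -/
abbrev Vtx (F : Type) := (F × F × F) ⊕ (F × F × F)

/-- Adjacency for the graph `Γ_F(p₁ℓ₁, g(p₁,p₂,ℓ₁))`: a point `(p₁,p₂,p₃)` and a line
`[ℓ₁,ℓ₂,ℓ₃]` are adjacent iff `p₂+ℓ₂ = p₁ℓ₁` and `p₃+ℓ₃ = g(p₁,p₂,ℓ₁)`. -/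
def gammaAdj (F : Type) [Field F] (g : F → F → F → F) : Vtx F → Vtx F → Prop
  | Sum.inl p, Sum.inr l => p.2.1 + l.2.1 = p.1 * l.1 ∧ p.2.2 + l.2.2 = g p.1 p.2.1 l.1
  | Sum.inr l, Sum.inl p => p.2.1 + l.2.1 = p.1 * l.1 ∧ p.2.2 + l.2.2 = g p.1 p.2.1 l.1
  | _, _ => False

/-- The bipartite graph `Γ_F(p₁ℓ₁, g(p₁,p₂,ℓ₁))`. -/
def Gamma (F : Type) [Field F] (g : F → F → F → F) : SimpleGraph (Vtx F) where
  Adj := gammaAdj F g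
  symm := by
    constructor
    intro v w h
    match v, w with
    | Sum.inl p, Sum.inr l => exact h
    | Sum.inr l, Sum.inl p => exact h
  loopless := by
    constructor
    intro v h
    match v with
    | Sum.inl p => exact h
    | Sum.inr l => exact h

/-- The graph `R = Γ_F(p₁ℓ₁, p₁p₂ℓ₁(p₁+p₂+p₁p₂))`. -/
def RGraph (F : Type) [Field F] : SimpleGraph (Vtx F) :=
  Gamma F (fun p1 p2 l1 => p1 * p2 * l1 * (p1 + p2 + p1 * p2))

/-- Let `q` be a power of an odd prime with `q ≡ 1 (mod 3)` and `F = 𝔽_q`. For all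
`x, y, r, s ∈ F` with `r ≠ s`, every walk in `R` from the line `[x,y,r]` to the line `[x,y,s]`
has length at least 6, and likewise every walk from the point `(x,y,r)` to the point `(x,y,s)`
has length at least 6. -/
lemma line4 {F : Type} [Field F] (g : F → F → F → F)
    (x y r s a1 a2 a3 l1 l2 l3 b1 b2 b3 : F)
    (ha1 : a2 + y = a1 * x) (ha2 : a3 + r = g a1 a2 x)
    (hb1 : a2 + l2 = a1 * l1) (hb2 : a3 + l3 = g a1 a2 l1)
    (hc1 : b2 + l2 = b1 * l1) (hc2 : b3 + l3 = g b1 b2 l1)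
    (hd1 : b2 + y = b1 * x) (hd2 : b3 + s = g b1 b2 x) : r = s := by
  by_cases h : l1 = x
  · subst h
    have h1 : r = l3 := by linear_combination ha2 - hb2
    have h2 : s = l3 := by linear_combination hd2 - hc2
    rw [h1, h2]
  · have hne : x - l1 ≠ 0 := sub_ne_zero.mpr (Ne.symm h)
    have hz : (a1 - b1) * (x - l1) = 0 := by linear_combination hb1 - ha1 + hd1 - hc1
    have hab : a1 = b1 := by
      rcases mul_eq_zero.mp hz with h' | h'
      · exact sub_eq_zero.mp h'
      · exact absurd h' hne
    have hab2 : a2 = b2 := by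
      subst hab; linear_combination ha1 - hd1
    subst hab; subst hab2
    linear_combination ha2 - hb2 + hc2 - hd2

lemma point4 {F : Type} [Field F] (g : F → F → F → F)
    (x y r s a1 a2 a3 u1 u2 u3 v1 v2 v3 : F)
    (ha1 : y + u2 = x * u1) (ha2 : r + u3 = g x y u1)
    (hb1 : a2 + u2 = a1 * u1) (hb2 : a3 + u3 = g a1 a2 u1)
    (hc1 : a2 + v2 = a1 * v1) (hc2 : a3 + v3 = g a1 a2 v1)
    (hd1 : y + v2 = x * v1) (hd2 : s + v3 = g x y v1) : r = s := by
  by_cases h : a1 = x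
  · subst h
    have hy : y = a2 := by linear_combination ha1 - hb1
    subst hy
    have h1 : r = a3 := by linear_combination ha2 - hb2
    have h2 : s = a3 := by linear_combination hd2 - hc2
    rw [h1, h2]
  · have hne : x - a1 ≠ 0 := sub_ne_zero.mpr (Ne.symm h)
    have hz : (x - a1) * (u1 - v1) = 0 := by linear_combination hb1 - ha1 + hd1 - hc1
    have huv : u1 = v1 := by
      rcases mul_eq_zero.mp hz with h' | h'
      · exact absurd h' hne
      · exact sub_eq_zero.mp h'
    subst huv
    linear_combination ha2 - hb2 + hc2 - hd2

lemma gamma_walk_bound_line {F : Type} [Field F] (g : F → F → F → F) (x y r s : F) (hrs : r ≠ s) :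
    (∀ w : (Gamma F g).Walk (Sum.inr (x, y, r)) (Sum.inr (x, y, s)), 6 ≤ w.length) := by
  intro w
  by_contra hlen
  push_neg at hlen
  cases w with
  | nil => exact hrs rfl
  | cons h1 w1 =>
    rename_i b1
    cases b1 with
    | inr l => exact h1.elim
    | inl p1 =>
      obtain ⟨a1, a2, a3⟩ := p1
      obtain ⟨ha1, ha2⟩ := h1
      cases w1 with
      | cons h2 w2 =>
        rename_i b2
        cases b2 with
        | inl p => exact h2.elim
        | inr l =>
          obtain ⟨l1, l2, l3⟩ := l
          obtain ⟨hb1, hb2⟩ := h2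
          cases w2 with
          | nil => exact hrs (by linear_combination ha2 - hb2)
          | cons h3 w3 =>
            rename_i b3
            cases b3 with
            | inr l' => exact h3.elim
            | inl p2 =>
              obtain ⟨c1, c2, c3⟩ := p2
              obtain ⟨hc1, hc2⟩ := h3
              cases w3 with
              | cons h4 w4 =>
                rename_i b4
                cases b4 with
                | inl p => exact h4.elim
                | inr l' =>
                  obtain ⟨m1, m2, m3⟩ := l'
                  obtain ⟨hd1, hd2⟩ := h4
                  cases w4 with
                  | nil =>
                    exact hrs (line4 g x y r s a1 a2 a3 l1 l2 l3 c1 c2 c3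
                      ha1 ha2 hb1 hb2 hc1 hc2 hd1 hd2)
                  | cons h5 w5 =>
                    rename_i b5
                    cases b5 with
                    | inr l'' => exact h5.elim
                    | inl p3 =>
                      cases w5 with
                      | cons h6 w6 =>
                        change w6.length + 1 + 1 + 1 + 1 + 1 + 1 < 6 at hlen
                        omega

lemma gamma_walk_bound_point {F : Type} [Field F] (g : F → F → F → F) (x y r s : F) (hrs : r ≠ s) :
    (∀ w : (Gamma F g).Walk (Sum.inl (x, y, r)) (Sum.inl (x, y, s)), 6 ≤ w.length) := by
  intro w
  by_contra hlen
  push_neg at hlen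
  cases w with
  | nil => exact hrs rfl
  | cons h1 w1 =>
    rename_i b1
    cases b1 with
    | inl p => exact h1.elim
    | inr L1 =>
      obtain ⟨u1, u2, u3⟩ := L1
      obtain ⟨ha1, ha2⟩ := h1
      cases w1 with
      | cons h2 w2 =>
        rename_i b2
        cases b2 with
        | inr l => exact h2.elim
        | inl p1 =>
          obtain ⟨a1, a2, a3⟩ := p1
          obtain ⟨hb1, hb2⟩ := h2
          cases w2 with
          | nil => exact hrs (by linear_combination ha2 - hb2)
          | cons h3 w3 =>
            rename_i b3
            cases b3 with
            | inl p => exact h3.elim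
            | inr L2 =>
              obtain ⟨v1, v2, v3⟩ := L2
              obtain ⟨hc1, hc2⟩ := h3
              cases w3 with
              | cons h4 w4 =>
                rename_i b4
                cases b4 with
                | inr l => exact h4.elim
                | inl p2 =>
                  obtain ⟨hd1, hd2⟩ := h4
                  cases w4 with
                  | nil =>
                    exact hrs (point4 g x y r s a1 a2 a3 u1 u2 u3 v1 v2 v3
                      ha1 ha2 hb1 hb2 hc1 hc2 hd1 hd2)
                  | cons h5 w5 =>
                    rename_i b5
                    cases b5 with
                    | inl p => exact h5.elim
                    | inr L3 =>
                      cases w5 with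
                      | cons h6 w6 =>
                        change w6.length + 1 + 1 + 1 + 1 + 1 + 1 < 6 at hlen
                        omega


theorem walks_length_ge_six (q p e : ℕ) (hp : p.Prime) (hodd : Odd p) (he : 1 ≤ e)
    (hq : q = p ^ e) (hmod : q % 3 = 1) (F : Type) [Field F] [Fintype F]
    (hcard : Fintype.card F = q) (x y r s : F) (hrs : r ≠ s) :
    (∀ w : (RGraph F).Walk (Sum.inr (x, y, r)) (Sum.inr (x, y, s)), 6 ≤ w.length) ∧
      (∀ w : (RGraph F).Walk (Sum.inl (x, y, r)) (Sum.inl (x, y, s)), 6 ≤ w.length) := by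
  exact ⟨gamma_walk_bound_line _ x y r s hrs, gamma_walk_bound_point _ x y r s hrs⟩
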